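/- (Explicit upper bound of the no-arbitrage price interval for a European basket call.) Let m, n ≥ 1, and for each i ∈ {1,…,m} let 0 < D_i < R < U_i, S_i(0) > 0, and b_i = (R − D_i)/(U_i − D_i); assume b_1 ≥ b_2 ≥ … ≥ b_m (set b_0 = 1). Let a_1,…,a_m ≥ 0 and K ≥ 0, and define X : 𝓛^n → ℝ by X(ω) = ( Σ_{i=1}^m a_i·S_i(0)·Π_{k=1}^n ψ_i(ω^k) − K )^+, where ψ_i(S) = U_i if i ∈ S, ψ_i(S) = D_i otherwise, and y^+ = max(y,0). Then max { E_P(X) : P ∈ M_n(b) } = Σ_{k_0+k_1+…+k_m=n, k_j ≥ 0 integers} (n!/(k_0!·k_1!⋯k_m!))·Π_{j=0}^m q*(μ_j)^{k_j} · ( Σ_{i=1}^m a_i·S_i(0)·D_i^{k_0+…+k_{i−1}}·U_i^{k_i+…+k_m} − K )^+. -/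

import Mathlib

noncomputable section

open Finset

/-- `ℓ_i` : indicator of `i ∈ S`. -/
def ell {m : ℕ} (i : Fin m) (S : Finset (Fin m)) : ℝ := if i ∈ S then 1 else 0

/-- `μ_j = {1,…,j}` (the first `j` elements of `Fin m`). -/
def mu (m j : ℕ) : Finset (Fin m) := Finset.univ.filter fun i => (i : ℕ) < j

/-- paper `b_j` for `j = 0,…,m`, with `b_0 = 1` (and `0` beyond `m`). -/
def bpaper {m : ℕ} (b : Fin m → ℝ) (j : ℕ) : ℝ :=
  if j = 0 then 1 else if h : j - 1 < m then b ⟨j - 1, h⟩ else 0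

/-- the upper supermodular vertex measure `q*`:
`q*(μ_j) = b_j − b_{j+1}` for `0 ≤ j ≤ m−1`, `q*(μ_m) = b_m`, and `q* = 0` elsewhere. -/
def qStar {m : ℕ} (b : Fin m → ℝ) (S : Finset (Fin m)) : ℝ :=
  ∑ j ∈ Finset.range (m + 1), if S = mu m j then bpaper b j - bpaper b (j + 1) else 0

/-- the lower supermodular vertex measure `q_*`:
`q_*(∅) = 1 − Σᵢ bᵢ`, `q_*({i}) = bᵢ`, and `q_* = 0` elsewhere. -/
def qLow {m : ℕ} (b : Fin m → ℝ) (S : Finset (Fin m)) : ℝ :=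
  if S = ∅ then 1 - ∑ i, b i else ∑ i : Fin m, if S = {i} then b i else 0

/-- membership in `M_1(b)`: a probability function with `E_x(ℓ_i) = b_i` for all `i`. -/
def MemM1 {m : ℕ} (b : Fin m → ℝ) (x : Finset (Fin m) → ℝ) : Prop :=
  (∀ S, 0 ≤ x S) ∧ (∑ S, x S = 1) ∧ (∀ i, ∑ S, ell i S * x S = b i)

/-- membership in `M_n(b)`: a probability function on `𝓛^n` satisfying, for every step `k`,
every prefix `λ` and every `i`, the conditional moment condition. -/
def MemMn {m n : ℕ} (b : Fin m → ℝ) (x : (Fin n → Finset (Fin m)) → ℝ) : Prop :=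
  (∀ ω, 0 ≤ x ω) ∧ (∑ ω, x ω = 1) ∧
  (∀ (k : Fin n) (lam : Fin n → Finset (Fin m)) (i : Fin m),
    (∑ ω, if ∀ j : Fin n, j < k → ω j = lam j then ell i (ω k) * x ω else 0) =
      b i * ∑ ω, if ∀ j : Fin n, j < k → ω j = lam j then x ω else 0)

/-- supermodular function on `𝓛`. -/
def Supermod {m : ℕ} (f : Finset (Fin m) → ℝ) : Prop :=
  ∀ S T, f S + f T ≤ f (S ∪ T) + f (S ∩ T)

/-- fibrewise supermodular function on `𝓛^n`. -/
def FibSupermod {m n : ℕ} (f : (Fin n → Finset (Fin m)) → ℝ) : Prop :=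
  ∀ (k : Fin n) (lam : Fin n → Finset (Fin m)),
    Supermod fun S => f (Function.update lam k S)

/-- the product measure `q^{⊗n}`. -/
def prodM {m n : ℕ} (q : Finset (Fin m) → ℝ) (ω : Fin n → Finset (Fin m)) : ℝ :=
  ∏ k, q (ω k)
section PartA

variable {m : ℕ} (b : Fin m → ℝ)

lemma mem_mu {i : Fin m} {j : ℕ} : i ∈ mu m j ↔ (i : ℕ) < j := by
  simp [mu]

lemma mu_zero : mu m 0 = ∅ := by
  ext i; simp [mem_mu]

lemma mu_succ {j : ℕ} (hj : j < m) : mu m (j + 1) = insert ⟨j, hj⟩ (mu m j) := by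
  ext i
  simp only [mem_mu, Finset.mem_insert, Fin.ext_iff]
  omega

lemma card_mu {j : ℕ} (hj : j ≤ m) : (mu m j).card = j := by
  induction j with
  | zero => simp [mu_zero]
  | succ j ih =>
    rw [mu_succ (by omega), Finset.card_insert_of_notMem (by simp [mem_mu]), ih (by omega)]

lemma mu_inj {j j' : ℕ} (hj : j ≤ m) (hj' : j' ≤ m) (h : mu m j = mu m j') : j = j' := by
  have := congrArg Finset.card h
  rwa [card_mu hj, card_mu hj'] at this

lemma qStar_mu {j : ℕ} (hj : j ≤ m) :
    qStar b (mu m j) = bpaper b j - bpaper b (j + 1) := by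
  rw [qStar, Finset.sum_eq_single_of_mem j (Finset.mem_range.2 (by omega))]
  · simp
  · intro j' hj' hne
    rw [if_neg]
    intro h
    exact hne (mu_inj hj (Nat.lt_succ_iff.1 (Finset.mem_range.1 hj')) h).symm

lemma qStar_eq_zero {S : Finset (Fin m)} (h : ∀ j ≤ m, S ≠ mu m j) : qStar b S = 0 := by
  rw [qStar]
  apply Finset.sum_eq_zero
  intro j hj
  rw [if_neg (h j (Nat.lt_succ_iff.1 (Finset.mem_range.1 hj)))]

lemma sum_qStar_mul (f : Finset (Fin m) → ℝ) :
    ∑ S, qStar b S * f S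
      = ∑ j ∈ Finset.range (m + 1), (bpaper b j - bpaper b (j + 1)) * f (mu m j) := by
  unfold qStar
  simp_rw [Finset.sum_mul]
  rw [Finset.sum_comm]
  refine Finset.sum_congr rfl fun j _ => ?_
  rw [Finset.sum_eq_single_of_mem (mu m j) (Finset.mem_univ _)]
  · simp
  · intro S _ hne
    rw [if_neg hne, zero_mul]

lemma bpaper_zero : bpaper b 0 = 1 := rfl

lemma bpaper_fin (i : Fin m) : bpaper b ((i : ℕ) + 1) = b i := by
  simp [bpaper]

lemma bpaper_top : bpaper b (m + 1) = 0 := by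
  simp [bpaper]

lemma sum_qStar : ∑ S, qStar b S = 1 := by
  have := sum_qStar_mul b (fun _ => 1)
  simp only [mul_one] at this
  rw [this, Finset.sum_range_sub' (bpaper b), bpaper_zero, bpaper_top, sub_zero]

lemma moment_qStar (i : Fin m) : ∑ S, ell i S * qStar b S = b i := by
  simp_rw [mul_comm (ell i _)]
  rw [sum_qStar_mul b (fun S => ell i S)]
  have key : ∀ j ∈ Finset.range (m + 1),
      (bpaper b j - bpaper b (j + 1)) * ell i (mu m j)
        = (fun j => if (i : ℕ) < j then bpaper b j else bpaper b ((i : ℕ) + 1)) j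
          - (fun j => if (i : ℕ) < j then bpaper b j else bpaper b ((i : ℕ) + 1)) (j + 1) := by
    intro j _
    simp only [ell, mem_mu]
    rcases lt_trichotomy (i : ℕ) j with h | h | h
    · rw [if_pos h, if_pos h, if_pos (by omega), mul_one]
    · rw [if_neg (by omega), if_neg (by omega), if_pos (by omega), mul_zero, h, sub_self]
    · rw [if_neg (by omega), if_neg (by omega), if_neg (by omega), mul_zero, sub_self]
  rw [Finset.sum_congr rfl key, Finset.sum_range_sub']
  simp only [Nat.not_lt_zero, if_false, if_pos (by omega : (i : ℕ) < m + 1)]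
  rw [bpaper_fin, bpaper_top, sub_zero]

lemma bpaper_antitone (hb1 : ∀ i, b i ≤ 1) (hmono : ∀ i j : Fin m, i ≤ j → b j ≤ b i)
    (hb0 : ∀ i, 0 ≤ b i) (j : ℕ) : bpaper b (j + 1) ≤ bpaper b j := by
  unfold bpaper
  rcases Nat.eq_zero_or_pos j with rfl | hj
  · rw [if_pos rfl, if_neg (by omega)]
    simp only [Nat.add_sub_cancel]
    split
    · exact hb1 _
    · norm_num
  · rw [if_neg (by omega), if_neg (by omega)]
    rcases lt_or_ge (j + 1 - 1) m with h | h
    · rw [dif_pos h, dif_pos (show j - 1 < m by omega)]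
      exact hmono ⟨j - 1, by omega⟩ ⟨j + 1 - 1, h⟩ (by simp only [Fin.le_def]; omega)
    · rw [dif_neg (by omega)]
      split
      · exact hb0 _
      · exact le_refl 0

lemma qStar_nonneg (hb1 : ∀ i, b i ≤ 1) (hmono : ∀ i j : Fin m, i ≤ j → b j ≤ b i)
    (hb0 : ∀ i, 0 ≤ b i) (S : Finset (Fin m)) : 0 ≤ qStar b S := by
  apply Finset.sum_nonneg
  intro j _
  split
  · exact sub_nonneg.2 (bpaper_antitone b hb1 hmono hb0 j)
  · exact le_refl 0

end PartA
section PartB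

variable {m : ℕ}

lemma chain_eq (f : Finset (Fin m) → ℝ) {j : ℕ} (hj : j ≤ m) :
    f (mu m j) = f ∅ +
      ∑ i : Fin m, ell i (mu m j) * (f (mu m ((i : ℕ) + 1)) - f (mu m (i : ℕ))) := by
  induction j with
  | zero =>
    rw [mu_zero]
    simp [ell, mu_zero]
  | succ j ih =>
    have hjm : j < m := by omega
    set y : Fin m → ℝ := fun i => f (mu m ((i : ℕ) + 1)) - f (mu m (i : ℕ)) with hy
    have hterm : ∀ i : Fin m,
        ell i (mu m (j + 1)) * y i
          = ell i (mu m j) * y i + (if i = (⟨j, hjm⟩ : Fin m) then y i else 0) := by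
      intro i
      simp only [ell, mem_mu, Fin.ext_iff]
      rcases lt_trichotomy (i : ℕ) j with h | h | h
      · rw [if_pos (by omega), if_pos h, if_neg (by omega)]; ring
      · rw [if_pos (by omega), if_neg (by omega), if_pos (by omega)]; ring
      · rw [if_neg (by omega), if_neg (by omega), if_neg (by omega)]; ring
    rw [Finset.sum_congr rfl (fun i _ => hterm i), Finset.sum_add_distrib,
      Finset.sum_ite_eq' Finset.univ (⟨j, hjm⟩ : Fin m) y, if_pos (Finset.mem_univ _)]
    have := ih (by omega)
    have hy0 : y ⟨j, hjm⟩ = f (mu m (j + 1)) - f (mu m j) := rfl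
    rw [hy0]
    linarith

lemma chain_le {f : Finset (Fin m) → ℝ} (hf : Supermod f) (S : Finset (Fin m)) :
    f S ≤ f ∅ +
      ∑ i : Fin m, ell i S * (f (mu m ((i : ℕ) + 1)) - f (mu m (i : ℕ))) := by
  set y : Fin m → ℝ := fun i => f (mu m ((i : ℕ) + 1)) - f (mu m (i : ℕ)) with hy
  induction S using Finset.strongInduction with
  | H S ih =>
    rcases Finset.eq_empty_or_nonempty S with rfl | hS
    · simp [ell]
    · set i : Fin m := S.max' hS with hidef
      have hiS : i ∈ S := S.max'_mem hS
      have hle : ∀ j ∈ S, j ≤ i := fun j hj => S.le_max' j hj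
      have eq1 : S ∪ mu m (i : ℕ) = mu m ((i : ℕ) + 1) := by
        ext j
        simp only [Finset.mem_union, mem_mu]
        constructor
        · rintro (h | h)
          · exact Nat.lt_succ_of_le (hle j h)
          · omega
        · intro h
          rcases lt_or_eq_of_le (Nat.lt_succ_iff.1 h) with h' | h'
          · right; exact h'
          · left; have : j = i := Fin.ext h'; rwa [this]
      have eq2 : S ∩ mu m (i : ℕ) = S.erase i := by
        ext j
        simp only [Finset.mem_inter, mem_mu, Finset.mem_erase]
        constructor
        · rintro ⟨h1, h2⟩
          exact ⟨fun h => by rw [h] at h2; omega, h1⟩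
        · rintro ⟨h1, h2⟩
          refine ⟨h2, ?_⟩
          have := hle j h2
          rcases lt_or_eq_of_le this with h' | h'
          · exact h'
          · exact absurd h' h1
      have hsup := hf S (mu m (i : ℕ))
      rw [eq1, eq2] at hsup
      have hih := ih (S.erase i) (Finset.erase_ssubset hiS)
      have hsum : ∑ i' : Fin m, ell i' S * y i'
          = (∑ i' : Fin m, ell i' (S.erase i) * y i') + y i := by
        have hterm : ∀ i' : Fin m,
            ell i' S * y i' = ell i' (S.erase i) * y i' + (if i' = i then y i' else 0) := by
          intro i'
          simp only [ell, Finset.mem_erase]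
          by_cases h : i' = i
          · subst h
            simp [hiS]
          · by_cases h2 : i' ∈ S <;> simp [h, h2]
        rw [Finset.sum_congr rfl (fun i' _ => hterm i'), Finset.sum_add_distrib,
          Finset.sum_ite_eq' Finset.univ i y, if_pos (Finset.mem_univ _)]
      have hyi : y i = f (mu m ((i : ℕ) + 1)) - f (mu m (i : ℕ)) := rfl
      rw [hsum]
      linarith

lemma one_period (b : Fin m → ℝ) {f : Finset (Fin m) → ℝ} (x : Finset (Fin m) → ℝ)
    (hf : Supermod f) (hx : ∀ S, 0 ≤ x S)
    (hmom : ∀ i, ∑ S, ell i S * x S = b i * ∑ S, x S) :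
    ∑ S, f S * x S ≤ (∑ S, x S) * ∑ S, qStar b S * f S := by
  set y : Fin m → ℝ := fun i => f (mu m ((i : ℕ) + 1)) - f (mu m (i : ℕ)) with hy
  set M : ℝ := ∑ S, x S with hM
  have h1 : ∑ S, f S * x S ≤ ∑ S, (f ∅ + ∑ i : Fin m, ell i S * y i) * x S := by
    apply Finset.sum_le_sum
    intro S _
    exact mul_le_mul_of_nonneg_right (chain_le hf S) (hx S)
  have h2 : ∑ S, (f ∅ + ∑ i : Fin m, ell i S * y i) * x S
      = f ∅ * M + ∑ i : Fin m, y i * (b i * M) := by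
    have e : ∀ S : Finset (Fin m), (f ∅ + ∑ i : Fin m, ell i S * y i) * x S
        = f ∅ * x S + ∑ i : Fin m, ell i S * y i * x S := by
      intro S; rw [add_mul, Finset.sum_mul]
    rw [Finset.sum_congr rfl (fun S _ => e S), Finset.sum_add_distrib]
    congr 1
    · rw [← Finset.mul_sum]
    rw [Finset.sum_comm]
    refine Finset.sum_congr rfl fun i _ => ?_
    rw [← hmom i, Finset.mul_sum]
    exact Finset.sum_congr rfl fun S _ => by ring
  have h3 : ∑ S, qStar b S * f S = f ∅ + ∑ i : Fin m, y i * b i := by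
    have hw1 : ∑ j ∈ Finset.range (m + 1), (bpaper b j - bpaper b (j + 1)) = 1 := by
      rw [Finset.sum_range_sub' (bpaper b), bpaper_zero, bpaper_top, sub_zero]
    have hwb : ∀ i : Fin m,
        ∑ j ∈ Finset.range (m + 1), (bpaper b j - bpaper b (j + 1)) * ell i (mu m j) = b i := by
      intro i
      have h := moment_qStar b i
      have h2 := sum_qStar_mul b (fun S => ell i S)
      simp_rw [mul_comm (ell i _)] at h
      rw [h2] at h
      exact h
    rw [sum_qStar_mul]
    have hcongr : ∀ j ∈ Finset.range (m + 1),
        (bpaper b j - bpaper b (j + 1)) * f (mu m j)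
          = (bpaper b j - bpaper b (j + 1)) * f ∅
            + ∑ i : Fin m, ((bpaper b j - bpaper b (j + 1)) * ell i (mu m j)) * y i := by
      intro j hj
      rw [chain_eq f (Nat.lt_succ_iff.1 (Finset.mem_range.1 hj)), mul_add, Finset.mul_sum]
      congr 1
      exact Finset.sum_congr rfl fun i _ => by ring
    rw [Finset.sum_congr rfl hcongr, Finset.sum_add_distrib, ← Finset.sum_mul, hw1, one_mul]
    congr 1
    rw [Finset.sum_comm]
    refine Finset.sum_congr rfl fun i _ => ?_
    rw [← Finset.sum_mul, hwb i, mul_comm]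
  have h4 : f ∅ * M + ∑ i : Fin m, y i * (b i * M) = M * (f ∅ + ∑ i : Fin m, y i * b i) := by
    rw [mul_add]
    congr 1
    · ring
    · rw [Finset.mul_sum]
      exact Finset.sum_congr rfl fun i _ => by ring
  calc ∑ S, f S * x S ≤ ∑ S, (f ∅ + ∑ i : Fin m, ell i S * y i) * x S := h1
    _ = f ∅ * M + ∑ i : Fin m, y i * (b i * M) := h2
    _ = M * (f ∅ + ∑ i : Fin m, y i * b i) := h4
    _ = M * ∑ S, qStar b S * f S := by rw [h3]

end PartB
section PartC

lemma sum_prod_fn {α β : Type*} [Fintype α] [DecidableEq α] [Fintype β] [DecidableEq β]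
    (g : α → β → ℝ) :
    ∑ ω : α → β, ∏ a, g a (ω a) = ∏ a, ∑ s : β, g a s := by
  have := Finset.sum_prod_piFinset (Finset.univ : Finset β) g
  rwa [Fintype.piFinset_univ] at this

lemma prod_split_one {α : Type*} [Fintype α] [DecidableEq α] (k0 : α) (A B : α → ℝ) (c : ℝ)
    (h : ∀ j, j ≠ k0 → A j = B j) (h0 : A k0 = c * B k0) :
    ∏ j, A j = c * ∏ j, B j := by
  rw [← Finset.mul_prod_erase Finset.univ A (Finset.mem_univ k0),
    ← Finset.mul_prod_erase Finset.univ B (Finset.mem_univ k0), h0,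
    Finset.prod_congr rfl (fun j hj => h j (Finset.ne_of_mem_erase hj))]
  ring

lemma sum_fn_split {β : Type*} [Fintype β] [DecidableEq β] {n : ℕ} (k0 : Fin n)
    (F : (Fin n → β) → ℝ) :
    ∑ τ : Fin n → β, F τ
      = ∑ S : β, ∑ σ : {j : Fin n // j ≠ k0} → β,
          F (fun j => if h : j = k0 then S else σ ⟨j, h⟩) := by
  rw [Fintype.sum_equiv (Equiv.funSplitAt k0 β) F
      (fun p => F ((Equiv.funSplitAt k0 β).symm p))
      (fun τ => by
        congr 1
        funext j
        by_cases h : j = k0 <;> simp [Equiv.funSplitAt_symm_apply, h]),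
    Fintype.sum_prod_type]
  refine Finset.sum_congr rfl fun S _ => Finset.sum_congr rfl fun σ _ => ?_
  congr 1
  funext j
  rw [Equiv.funSplitAt_symm_apply]

lemma dite_update {β : Type*} {n : ℕ} (k0 : Fin n) (σ : {j : Fin n // j ≠ k0} → β)
    (S S₀ : β) [DecidableEq (Fin n)] :
    (fun j => if h : j = k0 then S else σ ⟨j, h⟩)
      = Function.update (fun j => if h : j = k0 then S₀ else σ ⟨j, h⟩) k0 S := by
  funext j
  by_cases h : j = k0
  · subst h; simp
  · simp [h, Function.update_of_ne h]

end PartC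

section PartD

variable {m n : ℕ} (q : Finset (Fin m) → ℝ) (X : (Fin n → Finset (Fin m)) → ℝ)

/-- interpolation between `X` (t = n) and `E_{q^{⊗n}}(X)` (t = 0). -/
def Fk (t : ℕ) (ω : Fin n → Finset (Fin m)) : ℝ :=
  ∑ τ : Fin n → Finset (Fin m),
    (∏ k : Fin n, if (k : ℕ) < t then (if τ k = ω k then (1 : ℝ) else 0) else q (τ k)) * X τ

lemma Fk_of_ge {t : ℕ} (h : n ≤ t) (ω : Fin n → Finset (Fin m)) : Fk q X t ω = X ω := by
  unfold Fk
  have key : ∀ τ : Fin n → Finset (Fin m),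
      (∏ k : Fin n, if (k : ℕ) < t then (if τ k = ω k then (1 : ℝ) else 0) else q (τ k))
        = if τ = ω then 1 else 0 := by
    intro τ
    by_cases hτ : τ = ω
    · subst hτ
      rw [if_pos rfl]
      apply Finset.prod_eq_one
      intro k _
      rw [if_pos (lt_of_lt_of_le k.isLt h), if_pos rfl]
    · rw [if_neg hτ]
      obtain ⟨k, hk⟩ := Function.ne_iff.1 hτ
      exact Finset.prod_eq_zero (Finset.mem_univ k)
        (by rw [if_pos (lt_of_lt_of_le k.isLt h), if_neg hk])
  simp_rw [key, ite_mul, one_mul, zero_mul]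
  rw [Finset.sum_ite_eq' Finset.univ ω X, if_pos (Finset.mem_univ _)]

lemma Fk_zero (ω : Fin n → Finset (Fin m)) :
    Fk q X 0 ω = ∑ τ : Fin n → Finset (Fin m), prodM q τ * X τ := by
  unfold Fk prodM
  simp

lemma Fk_congr {t : ℕ} {ω ω' : Fin n → Finset (Fin m)}
    (h : ∀ k : Fin n, (k : ℕ) < t → ω k = ω' k) : Fk q X t ω = Fk q X t ω' := by
  unfold Fk
  refine Finset.sum_congr rfl fun τ _ => ?_
  congr 1
  refine Finset.prod_congr rfl fun k _ => ?_
  by_cases hk : (k : ℕ) < t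
  · rw [if_pos hk, if_pos hk, h k hk]
  · rw [if_neg hk, if_neg hk]

lemma Fk_prod_split {t : ℕ} (ht : t < n) (ω : Fin n → Finset (Fin m))
    (S : Finset (Fin m)) (τ : Fin n → Finset (Fin m)) :
    (∏ k : Fin n, if (k : ℕ) < t + 1
        then (if τ k = Function.update ω ⟨t, ht⟩ S k then (1 : ℝ) else 0) else q (τ k))
      = (if τ ⟨t, ht⟩ = S then 1 else 0)
        * ∏ k : Fin n, (if (k : ℕ) < t then (if τ k = ω k then (1 : ℝ) else 0)
            else if k = (⟨t, ht⟩ : Fin n) then 1 else q (τ k)) := by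
  apply prod_split_one
  · intro j hj
    by_cases h : (j : ℕ) < t
    · rw [if_pos (by omega), if_pos h, Function.update_of_ne hj]
    · have : (j : ℕ) ≠ t := fun hc => hj (Fin.ext hc)
      rw [if_neg (by omega), if_neg h, if_neg hj]
  · rw [if_pos (by simp : ((⟨t, ht⟩ : Fin n) : ℕ) < t + 1), Function.update_self,
      if_neg (by simp : ¬ ((⟨t, ht⟩ : Fin n) : ℕ) < t), if_pos rfl, mul_one]

lemma Fk_step {t : ℕ} (ht : t < n) (ω : Fin n → Finset (Fin m)) :
    Fk q X t ω = ∑ S : Finset (Fin m), q S * Fk q X (t + 1) (Function.update ω ⟨t, ht⟩ S) := by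
  unfold Fk
  simp_rw [Finset.mul_sum]
  rw [Finset.sum_comm]
  refine Finset.sum_congr rfl fun τ _ => ?_
  have e1 : ∀ S : Finset (Fin m),
      q S * ((∏ k : Fin n, if (k : ℕ) < t + 1
          then (if τ k = Function.update ω ⟨t, ht⟩ S k then (1 : ℝ) else 0) else q (τ k)) * X τ)
        = (if τ ⟨t, ht⟩ = S then q S else 0)
          * ((∏ k : Fin n, (if (k : ℕ) < t then (if τ k = ω k then (1 : ℝ) else 0)
              else if k = (⟨t, ht⟩ : Fin n) then 1 else q (τ k))) * X τ) := by
    intro S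
    rw [Fk_prod_split q ht ω S τ]
    split_ifs with h
    · ring
    · ring
  rw [Finset.sum_congr rfl fun S _ => e1 S, ← Finset.sum_mul, Finset.sum_ite_eq,
    if_pos (Finset.mem_univ _), ← mul_assoc]
  congr 1
  apply prod_split_one
  · intro j hj
    by_cases h : (j : ℕ) < t
    · rw [if_pos h, if_pos h]
    · rw [if_neg h, if_neg h, if_neg hj]
  · rw [if_neg (by simp : ¬ ((⟨t, ht⟩ : Fin n) : ℕ) < t), if_neg (by simp : ¬ ((⟨t, ht⟩ : Fin n) : ℕ) < t), if_pos rfl, mul_one]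

end PartD
section PartE

variable {m n : ℕ}

lemma Fk_update_supermod (q : Finset (Fin m) → ℝ) (X : (Fin n → Finset (Fin m)) → ℝ)
    (hq0 : ∀ S, 0 ≤ q S) (hX : FibSupermod X) {t : ℕ} (ht : t < n)
    (lam : Fin n → Finset (Fin m)) :
    Supermod (fun S => Fk q X (t + 1) (Function.update lam ⟨t, ht⟩ S)) := by
  set t0 : Fin n := ⟨t, ht⟩ with ht0
  set base : ({j : Fin n // j ≠ t0} → Finset (Fin m)) → (Fin n → Finset (Fin m)) :=
    fun σ j => if h : j = t0 then ∅ else σ ⟨j, h⟩ with hbase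
  set W : ({j : Fin n // j ≠ t0} → Finset (Fin m)) → ℝ :=
    fun σ => ∏ k : Fin n, (if (k : ℕ) < t then (if base σ k = lam k then (1 : ℝ) else 0)
      else if k = t0 then 1 else q (base σ k)) with hW
  have hW0 : ∀ σ, 0 ≤ W σ := by
    intro σ
    apply Finset.prod_nonneg
    intro k _
    split
    · split <;> norm_num
    · split
      · norm_num
      · exact hq0 _
  have repr : ∀ S, Fk q X (t + 1) (Function.update lam t0 S)
      = ∑ σ, W σ * X (Function.update (base σ) t0 S) := by
    intro S
    unfold Fk
    rw [Finset.sum_congr rfl (fun τ _ => by rw [Fk_prod_split q ht lam S τ])]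
    rw [sum_fn_split t0]
    rw [Finset.sum_comm]
    refine Finset.sum_congr rfl fun σ _ => ?_
    have hrecomb : ∀ S' : Finset (Fin m),
        (fun j => if h : j = t0 then S' else σ ⟨j, h⟩)
          = Function.update (base σ) t0 S' := by
      intro S'
      exact dite_update t0 σ S' ∅
    have hCW : ∀ S' : Finset (Fin m),
        (∏ k : Fin n, (if (k : ℕ) < t
            then (if (fun j => if h : j = t0 then S' else σ ⟨j, h⟩) k = lam k then (1 : ℝ) else 0)
            else if k = t0 then 1 else q ((fun j => if h : j = t0 then S' else σ ⟨j, h⟩) k)))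
          = W σ := by
      intro S'
      refine Finset.prod_congr rfl fun k _ => ?_
      by_cases hk : k = t0
      · subst hk
        rw [if_neg (by simp [ht0] : ¬ ((t0 : Fin n) : ℕ) < t), if_neg (by simp [ht0] : ¬ ((t0 : Fin n) : ℕ) < t),
          if_pos rfl, if_pos rfl]
      · have : (fun j => if h : j = t0 then S' else σ ⟨j, h⟩) k = base σ k := by
          simp only [hbase, dif_neg hk]
        rw [this]
    have hterm : ∀ S' : Finset (Fin m),
        ((if (fun j => if h : j = t0 then S' else σ ⟨j, h⟩) t0 = S then (1 : ℝ) else 0)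
          * ∏ k : Fin n, (if (k : ℕ) < t
            then (if (fun j => if h : j = t0 then S' else σ ⟨j, h⟩) k = lam k then (1 : ℝ) else 0)
            else if k = t0 then 1 else q ((fun j => if h : j = t0 then S' else σ ⟨j, h⟩) k)))
          * X (fun j => if h : j = t0 then S' else σ ⟨j, h⟩)
        = if S' = S then W σ * X (Function.update (base σ) t0 S') else 0 := by
      intro S'
      rw [hCW S', hrecomb S']
      have : (Function.update (base σ) t0 S') t0 = S' := Function.update_self _ _ _
      rw [this]
      by_cases h : S' = S
      · rw [if_pos h, if_pos h, one_mul]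
      · rw [if_neg h, if_neg h, zero_mul, zero_mul]
    rw [Finset.sum_congr rfl fun S' _ => hterm S', Finset.sum_ite_eq' Finset.univ S,
      if_pos (Finset.mem_univ _)]
  intro A B
  dsimp only
  rw [repr, repr, repr, repr, ← Finset.sum_add_distrib, ← Finset.sum_add_distrib]
  apply Finset.sum_le_sum
  intro σ _
  rw [← mul_add, ← mul_add]
  exact mul_le_mul_of_nonneg_left (hX t0 (base σ) A B) (hW0 σ)

lemma step_le (b : Fin m → ℝ) (X : (Fin n → Finset (Fin m)) → ℝ)
    (hq0 : ∀ S, 0 ≤ qStar b S) (hX : FibSupermod X)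
    {P : (Fin n → Finset (Fin m)) → ℝ} (hP : MemMn b P) {t : ℕ} (ht : t < n) :
    ∑ ω, Fk (qStar b) X (t + 1) ω * P ω ≤ ∑ ω, Fk (qStar b) X t ω * P ω := by
  classical
  set q := qStar b with hq
  set t0 : Fin n := ⟨t, ht⟩ with ht0
  obtain ⟨hP0, hP1, hPc⟩ := hP
  -- conditional measure given prefix lam
  set x : (Fin n → Finset (Fin m)) → Finset (Fin m) → ℝ :=
    fun lam S => ∑ ω, if (∀ j : Fin n, j < t0 → ω j = lam j) ∧ ω t0 = S then P ω else 0
      with hx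
  have hx0 : ∀ lam S, 0 ≤ x lam S := by
    intro lam S
    apply Finset.sum_nonneg
    intro ω _
    split
    · exact hP0 ω
    · exact le_refl 0
  have hxmass : ∀ lam, ∑ S, x lam S
      = ∑ ω, if ∀ j : Fin n, j < t0 → ω j = lam j then P ω else 0 := by
    intro lam
    rw [Finset.sum_comm]
    refine Finset.sum_congr rfl fun ω _ => ?_
    have e : ∀ S, (if (∀ j : Fin n, j < t0 → ω j = lam j) ∧ ω t0 = S then P ω else 0)
        = if ω t0 = S then (if (∀ j : Fin n, j < t0 → ω j = lam j) then P ω else 0) else 0 := by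
      intro S
      by_cases h1 : ω t0 = S <;> by_cases h2 : (∀ j : Fin n, j < t0 → ω j = lam j) <;>
        simp [h1, h2]
    rw [Finset.sum_congr rfl fun S _ => e S, Finset.sum_ite_eq, if_pos (Finset.mem_univ _)]
  have hxmom : ∀ lam i, ∑ S, ell i S * x lam S = b i * ∑ S, x lam S := by
    intro lam i
    rw [hxmass lam]
    have := hPc t0 lam i
    rw [← this]
    simp_rw [hx, Finset.mul_sum]
    rw [Finset.sum_comm]
    refine Finset.sum_congr rfl fun ω _ => ?_
    have e : ∀ S, ell i S * (if (∀ j : Fin n, j < t0 → ω j = lam j) ∧ ω t0 = S then P ω else 0)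
        = if ω t0 = S then (if (∀ j : Fin n, j < t0 → ω j = lam j) then ell i S * P ω else 0)
          else 0 := by
      intro S
      by_cases h1 : ω t0 = S <;> by_cases h2 : (∀ j : Fin n, j < t0 → ω j = lam j) <;>
        simp [h1, h2]
    rw [Finset.sum_congr rfl fun S _ => e S, Finset.sum_ite_eq, if_pos (Finset.mem_univ _)]
  -- the one-period inequality for each prefix
  have key : ∀ lam, ∑ S, Fk q X (t + 1) (Function.update lam t0 S) * x lam S
      ≤ (∑ S, x lam S) * ∑ S, q S * Fk q X (t + 1) (Function.update lam t0 S) := by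
    intro lam
    exact one_period b (x lam) (Fk_update_supermod q X hq0 hX ht lam) (hx0 lam) (hxmom lam)
  -- counting constant
  set c : ℝ := ∏ j : Fin n, (if j < t0 then (1 : ℝ) else (Fintype.card (Finset (Fin m)) : ℝ))
    with hc
  have hcpos : 0 < c := by
    apply Finset.prod_pos
    intro j _
    split
    · norm_num
    · exact_mod_cast Fintype.card_pos
  have hcount : ∀ ω : Fin n → Finset (Fin m),
      ∑ lam : Fin n → Finset (Fin m),
        (if ∀ j : Fin n, j < t0 → ω j = lam j then (1 : ℝ) else 0) = c := by
    intro ω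
    have e : ∀ lam : Fin n → Finset (Fin m),
        (if ∀ j : Fin n, j < t0 → ω j = lam j then (1 : ℝ) else 0)
          = ∏ j : Fin n, (if j < t0 then (if lam j = ω j then (1 : ℝ) else 0) else 1) := by
      intro lam
      by_cases h : ∀ j : Fin n, j < t0 → ω j = lam j
      · rw [if_pos h]
        symm
        apply Finset.prod_eq_one
        intro j _
        by_cases hj : j < t0
        · rw [if_pos hj, if_pos (h j hj).symm]
        · rw [if_neg hj]
      · rw [if_neg h]
        push_neg at h
        obtain ⟨j, hj1, hj2⟩ := h
        symm
        apply Finset.prod_eq_zero (Finset.mem_univ j)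
        rw [if_pos hj1, if_neg (fun hc' => hj2 hc'.symm)]
    rw [Finset.sum_congr rfl fun lam _ => e lam,
      sum_prod_fn (fun (j : Fin n) (s : Finset (Fin m)) =>
        if j < t0 then (if s = ω j then (1 : ℝ) else 0) else 1)]
    refine Finset.prod_congr rfl fun j _ => ?_
    by_cases hj : j < t0
    · simp only [if_pos hj]
      rw [Finset.sum_ite_eq' Finset.univ (ω j) (fun _ => (1 : ℝ)), if_pos (Finset.mem_univ _)]
    · simp only [if_neg hj]
      rw [Finset.sum_const, Finset.card_univ, nsmul_eq_mul, mul_one]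
  -- A = c * LHS
  have hA : ∑ lam : Fin n → Finset (Fin m),
      ∑ S, Fk q X (t + 1) (Function.update lam t0 S) * x lam S
      = c * ∑ ω, Fk q X (t + 1) ω * P ω := by
    have step1 : ∀ lam, ∑ S, Fk q X (t + 1) (Function.update lam t0 S) * x lam S
        = ∑ ω, (if ∀ j : Fin n, j < t0 → ω j = lam j then (1 : ℝ) else 0)
            * (Fk q X (t + 1) ω * P ω) := by
      intro lam
      simp_rw [hx, Finset.mul_sum]
      rw [Finset.sum_comm]
      refine Finset.sum_congr rfl fun ω _ => ?_
      have e : ∀ S, Fk q X (t + 1) (Function.update lam t0 S)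
            * (if (∀ j : Fin n, j < t0 → ω j = lam j) ∧ ω t0 = S then P ω else 0)
          = if ω t0 = S then (if (∀ j : Fin n, j < t0 → ω j = lam j)
              then Fk q X (t + 1) (Function.update lam t0 S) * P ω else 0) else 0 := by
        intro S
        by_cases h1 : ω t0 = S <;> by_cases h2 : (∀ j : Fin n, j < t0 → ω j = lam j) <;>
          simp [h1, h2]
      rw [Finset.sum_congr rfl fun S _ => e S, Finset.sum_ite_eq, if_pos (Finset.mem_univ _)]
      by_cases h2 : (∀ j : Fin n, j < t0 → ω j = lam j)
      · rw [if_pos h2, if_pos h2, one_mul]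
        congr 1
        apply Fk_congr
        intro k hk
        by_cases hkt : k = t0
        · subst hkt
          rw [Function.update_self]
        · have hklt : k < t0 := by
            show (k : ℕ) < t
            have : (k : ℕ) ≠ t := fun hcc => hkt (Fin.ext hcc)
            omega
          rw [Function.update_of_ne hkt, ← h2 k hklt]
      · rw [if_neg h2, if_neg h2, zero_mul]
    rw [Finset.sum_congr rfl fun lam _ => step1 lam, Finset.sum_comm, Finset.mul_sum]
    refine Finset.sum_congr rfl fun ω _ => ?_
    rw [← Finset.sum_mul, hcount ω]
  -- B = c * RHS
  have hB : ∑ lam : Fin n → Finset (Fin m),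
      (∑ S, x lam S) * ∑ S, q S * Fk q X (t + 1) (Function.update lam t0 S)
      = c * ∑ ω, Fk q X t ω * P ω := by
    have step1 : ∀ lam, (∑ S, x lam S) * ∑ S, q S * Fk q X (t + 1) (Function.update lam t0 S)
        = ∑ ω, (if ∀ j : Fin n, j < t0 → ω j = lam j then (1 : ℝ) else 0)
            * (Fk q X t ω * P ω) := by
      intro lam
      rw [hxmass lam, Finset.sum_mul]
      refine Finset.sum_congr rfl fun ω _ => ?_
      by_cases h2 : (∀ j : Fin n, j < t0 → ω j = lam j)
      · rw [if_pos h2, if_pos h2, one_mul]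
        have : ∑ S, q S * Fk q X (t + 1) (Function.update lam t0 S)
            = ∑ S, q S * Fk q X (t + 1) (Function.update ω t0 S) := by
          refine Finset.sum_congr rfl fun S _ => ?_
          congr 1
          apply Fk_congr
          intro k hk
          by_cases hkt : k = t0
          · subst hkt
            rw [Function.update_self, Function.update_self]
          · have hklt : k < t0 := by
              show (k : ℕ) < t
              have : (k : ℕ) ≠ t := fun hcc => hkt (Fin.ext hcc)
              omega
            rw [Function.update_of_ne hkt, Function.update_of_ne hkt, h2 k hklt]
        rw [this, ← Fk_step q X ht ω]
        ring
      · rw [if_neg h2, if_neg h2, zero_mul, zero_mul]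
    rw [Finset.sum_congr rfl fun lam _ => step1 lam, Finset.sum_comm, Finset.mul_sum]
    refine Finset.sum_congr rfl fun ω _ => ?_
    rw [← Finset.sum_mul, hcount ω]
  have hAB : ∑ lam : Fin n → Finset (Fin m),
      ∑ S, Fk q X (t + 1) (Function.update lam t0 S) * x lam S
      ≤ ∑ lam : Fin n → Finset (Fin m),
        (∑ S, x lam S) * ∑ S, q S * Fk q X (t + 1) (Function.update lam t0 S) :=
    Finset.sum_le_sum fun lam _ => key lam
  rw [hA, hB] at hAB
  exact (mul_le_mul_iff_right₀ hcpos).1 hAB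

lemma upper_bound (b : Fin m → ℝ) (X : (Fin n → Finset (Fin m)) → ℝ)
    (hq0 : ∀ S, 0 ≤ qStar b S) (hX : FibSupermod X)
    {P : (Fin n → Finset (Fin m)) → ℝ} (hP : MemMn b P) :
    ∑ ω, X ω * P ω ≤ ∑ τ : Fin n → Finset (Fin m), prodM (qStar b) τ * X τ := by
  set q := qStar b with hq
  have mono : ∀ t : ℕ, ∑ ω, Fk q X t ω * P ω ≤ ∑ ω, Fk q X 0 ω * P ω := by
    intro t
    induction t with
    | zero => exact le_refl _
    | succ t ih =>
      rcases lt_or_ge t n with h | h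
      · exact (step_le b X hq0 hX hP h).trans ih
      · have e : ∀ ω, Fk q X (t + 1) ω = Fk q X t ω := by
          intro ω
          rw [Fk_of_ge q X (by omega) ω, Fk_of_ge q X h ω]
        calc ∑ ω, Fk q X (t + 1) ω * P ω = ∑ ω, Fk q X t ω * P ω :=
              Finset.sum_congr rfl fun ω _ => by rw [e ω]
          _ ≤ _ := ih
  have h0 : ∑ ω, Fk q X 0 ω * P ω = ∑ τ : Fin n → Finset (Fin m), prodM q τ * X τ := by
    have e : ∀ ω, Fk q X 0 ω = ∑ τ : Fin n → Finset (Fin m), prodM q τ * X τ :=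
      fun ω => Fk_zero q X ω
    rw [Finset.sum_congr rfl fun ω _ => by rw [e ω], ← Finset.mul_sum, hP.2.1, mul_one]
  have hn : ∑ ω, X ω * P ω = ∑ ω, Fk q X n ω * P ω :=
    Finset.sum_congr rfl fun ω _ => by rw [Fk_of_ge q X (le_refl n) ω]
  rw [hn, ← h0]
  exact mono n

end PartE
section PartF

variable {m n : ℕ}

lemma prodM_memMn (b : Fin m → ℝ) (hq0 : ∀ S, 0 ≤ qStar b S) :
    MemMn b (prodM (qStar b) : (Fin n → Finset (Fin m)) → ℝ) := by
  classical
  set q := qStar b with hqdef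
  refine ⟨?_, ?_, ?_⟩
  · intro ω
    exact Finset.prod_nonneg fun k _ => hq0 (ω k)
  · unfold prodM
    rw [sum_prod_fn (fun (_ : Fin n) (S : Finset (Fin m)) => q S)]
    rw [Finset.prod_congr rfl fun k _ => sum_qStar b]
    simp
  · intro k0 lam i
    set wR : Fin n → Finset (Fin m) → ℝ :=
      fun j S => if j < k0 then (if S = lam j then q S else 0) else q S with hwR
    set wL : Fin n → Finset (Fin m) → ℝ :=
      fun j S => if j < k0 then (if S = lam j then q S else 0)
        else if j = k0 then ell i S * q S else q S with hwL
    have claimR : ∀ ω : Fin n → Finset (Fin m),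
        (if ∀ j : Fin n, j < k0 → ω j = lam j then prodM q ω else 0)
          = ∏ j : Fin n, wR j (ω j) := by
      intro ω
      by_cases h : ∀ j : Fin n, j < k0 → ω j = lam j
      · rw [if_pos h]
        unfold prodM
        refine Finset.prod_congr rfl fun j _ => ?_
        by_cases hj : j < k0
        · simp only [hwR, if_pos hj, if_pos (h j hj)]
        · simp only [hwR, if_neg hj]
      · rw [if_neg h]
        push_neg at h
        obtain ⟨j0, hj1, hj2⟩ := h
        symm
        apply Finset.prod_eq_zero (Finset.mem_univ j0)
        simp only [hwR, if_pos hj1, if_neg hj2]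
    have claimL : ∀ ω : Fin n → Finset (Fin m),
        (if ∀ j : Fin n, j < k0 → ω j = lam j then ell i (ω k0) * prodM q ω else 0)
          = ∏ j : Fin n, wL j (ω j) := by
      intro ω
      have hsplit : ∏ j : Fin n, wL j (ω j) = ell i (ω k0) * ∏ j : Fin n, wR j (ω j) := by
        apply prod_split_one
        · intro j hj
          simp only [hwL, hwR]
          by_cases h1 : j < k0
          · rw [if_pos h1, if_pos h1]
          · rw [if_neg h1, if_neg h1, if_neg hj]
        · simp only [hwL, hwR, if_neg (lt_irrefl k0), if_pos rfl, if_true]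
      rw [hsplit, ← claimR ω]
      by_cases h : ∀ j : Fin n, j < k0 → ω j = lam j
      · rw [if_pos h, if_pos h]
      · rw [if_neg h, if_neg h, mul_zero]
    rw [Finset.sum_congr rfl fun ω _ => claimL ω, Finset.sum_congr rfl fun ω _ => claimR ω,
      sum_prod_fn wL, sum_prod_fn wR]
    apply prod_split_one
    · intro j hj
      refine Finset.sum_congr rfl fun S _ => ?_
      simp only [hwL, hwR]
      by_cases h1 : j < k0
      · rw [if_pos h1, if_pos h1]
      · rw [if_neg h1, if_neg h1, if_neg hj]
    · have eL : ∀ S : Finset (Fin m), wL k0 S = ell i S * q S := by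
        intro S
        simp only [hwL, if_neg (lt_irrefl k0), if_pos rfl, if_true]
      have eR : ∀ S : Finset (Fin m), wR k0 S = q S := by
        intro S
        simp only [hwR, if_neg (lt_irrefl k0)]
      rw [Finset.sum_congr rfl fun S _ => eL S, Finset.sum_congr rfl fun S _ => eR S,
        moment_qStar b i, sum_qStar b, mul_one]

end PartF
section PartG

/-- number of coordinates mapping to `j`. -/
def cntv {n M : ℕ} (c : Fin n → Fin M) (j : Fin M) : ℕ :=
  ∑ k : Fin n, if c k = j then 1 else 0

lemma cntv_cons {n M : ℕ} (a : Fin M) (c : Fin n → Fin M) (j : Fin M) :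
    cntv (Fin.cons a c) j = (if a = j then 1 else 0) + cntv c j := by
  unfold cntv
  rw [Fin.sum_univ_succ]
  simp [Fin.cons_zero, Fin.cons_succ]

lemma sum_cntv {n M : ℕ} (c : Fin n → Fin M) : ∑ j, cntv c j = n := by
  unfold cntv
  rw [Finset.sum_comm]
  have e : ∀ k : Fin n, ∑ j : Fin M, (if c k = j then (1 : ℕ) else 0) = 1 := by
    intro k
    rw [Finset.sum_ite_eq Finset.univ (c k) (fun _ => (1 : ℕ)), if_pos (Finset.mem_univ _)]
  rw [Finset.sum_congr rfl fun k _ => e k]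
  simp

lemma count_lemma {M : ℕ} : ∀ (n : ℕ) (kk : Fin M → ℕ), (∑ j, kk j) = n →
    (∏ j, (kk j).factorial) *
      (Finset.univ.filter fun c : Fin n → Fin M => cntv c = kk).card = n.factorial := by
  intro n
  induction n with
  | zero =>
    intro kk hkk
    have hkk0 : kk = fun _ => 0 := by
      funext j
      exact Finset.sum_eq_zero_iff.1 hkk j (Finset.mem_univ j)
    subst hkk0
    have hfil : (Finset.univ.filter fun c : Fin 0 → Fin M => cntv c = fun _ => 0)
        = Finset.univ := by
      apply Finset.filter_true_of_mem
      intro c _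
      funext j
      unfold cntv
      simp
    rw [hfil, Finset.card_univ]
    simp [Nat.factorial]
  | succ n ih =>
    intro kk hkk
    have hcard : (Finset.univ.filter fun c : Fin (n + 1) → Fin M => cntv c = kk).card
        = ∑ a : Fin M, if kk a = 0 then 0 else
            (Finset.univ.filter fun c' : Fin n → Fin M =>
              cntv c' = Function.update kk a (kk a - 1)).card := by
      rw [Finset.card_filter]
      rw [Fintype.sum_equiv (Fin.consEquiv (fun _ => Fin M))
        (fun p => if cntv (Fin.cons p.1 p.2) = kk then (1 : ℕ) else 0)
        (fun c => if cntv c = kk then 1 else 0) (fun p => rfl) |>.symm]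
      rw [Fintype.sum_prod_type]
      refine Finset.sum_congr rfl fun a _ => ?_
      have hcond : ∀ c' : Fin n → Fin M, (cntv (Fin.cons a c') = kk)
          ↔ (kk a ≠ 0 ∧ cntv c' = Function.update kk a (kk a - 1)) := by
        intro c'
        constructor
        · intro h
          have ha := congrFun h a
          rw [cntv_cons, if_pos rfl] at ha
          refine ⟨by omega, ?_⟩
          funext j
          by_cases hj : j = a
          · subst hj
            rw [Function.update_self]
            omega
          · have hcj := congrFun h j
            rw [cntv_cons, if_neg (fun hc => hj hc.symm)] at hcj
            rw [Function.update_of_ne hj]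
            omega
        · rintro ⟨h0, h1⟩
          funext j
          rw [cntv_cons]
          by_cases hj : j = a
          · subst hj
            have := congrFun h1 j
            rw [Function.update_self] at this
            rw [if_pos rfl]
            omega
          · have := congrFun h1 j
            rw [Function.update_of_ne hj] at this
            rw [if_neg (fun hc => hj hc.symm)]
            omega
      rw [Finset.sum_congr rfl fun c' _ => if_congr (hcond c') rfl rfl]
      by_cases hka : kk a = 0
      · rw [if_pos hka]
        apply Finset.sum_eq_zero
        intro c' _
        rw [if_neg (fun hc => hc.1 hka)]
      · rw [if_neg hka, Finset.card_filter]
        refine Finset.sum_congr rfl fun c' _ => ?_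
        exact if_congr (and_iff_right hka) rfl rfl
    rw [hcard, Finset.mul_sum]
    have hterm : ∀ a : Fin M,
        (∏ j, (kk j).factorial) * (if kk a = 0 then 0 else
            (Finset.univ.filter fun c' : Fin n → Fin M =>
              cntv c' = Function.update kk a (kk a - 1)).card)
          = kk a * n.factorial := by
      intro a
      by_cases hka : kk a = 0
      · rw [if_pos hka, mul_zero, hka, zero_mul]
      · rw [if_neg hka]
        set kk' := Function.update kk a (kk a - 1) with hkk'
        have hsum' : ∑ j, kk' j = n := by
          rw [hkk', Finset.sum_update_of_mem (Finset.mem_univ a), ← Finset.erase_eq]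
          rw [← Finset.sum_erase_add Finset.univ kk (Finset.mem_univ a)] at hkk
          omega
        have hprod : ∏ j, (kk j).factorial = kk a * ∏ j, (kk' j).factorial := by
          have e : ∀ j, (kk' j).factorial
              = Function.update (fun j => (kk j).factorial) a ((kk a - 1).factorial) j := by
            intro j
            by_cases hj : j = a
            · subst hj
              rw [hkk', Function.update_self, Function.update_self]
            · rw [hkk', Function.update_of_ne hj, Function.update_of_ne hj]
          rw [Finset.prod_congr rfl fun j _ => e j,
            Finset.prod_update_of_mem (Finset.mem_univ a), ← Finset.erase_eq,
            ← Finset.mul_prod_erase Finset.univ (fun j => (kk j).factorial) (Finset.mem_univ a),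
            ← mul_assoc]
          congr 1
          obtain ⟨s, hs⟩ : ∃ s, kk a = s + 1 := ⟨kk a - 1, by omega⟩
          rw [hs]
          simp [Nat.factorial_succ]
        rw [hprod, mul_assoc, ih kk' hsum']
    rw [Finset.sum_congr rfl fun a _ => hterm a, ← Finset.sum_mul, hkk, Nat.factorial_succ]

lemma prod_comp_cntv {n M : ℕ} (f : Fin M → ℝ) (c : Fin n → Fin M) :
    ∏ k : Fin n, f (c k) = ∏ j : Fin M, f j ^ cntv c j := by
  rw [Finset.prod_comp f c]
  rw [Finset.prod_subset (Finset.subset_univ (Finset.image c Finset.univ)) ?_]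
  · refine Finset.prod_congr rfl fun j _ => ?_
    congr 1
    rw [Finset.card_filter]
    rfl
  · intro j _ hj
    have : (Finset.univ.filter fun k => c k = j) = ∅ := by
      apply Finset.filter_eq_empty_iff.2
      intro k _
      intro hc
      exact hj (Finset.mem_image.2 ⟨k, Finset.mem_univ k, hc⟩)
    rw [this, Finset.card_empty, pow_zero]

end PartG
section PartG2

variable {m n : ℕ}

lemma payoff_prod (D U : Fin m → ℝ) (i : Fin m) (c : Fin n → Fin (m + 1)) :
    (∏ k : Fin n, if i ∈ mu m ((c k : ℕ)) then U i else D i)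
      = D i ^ (∑ j : Fin (m + 1), if (j : ℕ) ≤ (i : ℕ) then cntv c j else 0) *
        U i ^ (∑ j : Fin (m + 1), if (i : ℕ) < (j : ℕ) then cntv c j else 0) := by
  have e1 : ∀ k : Fin n, (if i ∈ mu m ((c k : ℕ)) then U i else D i)
      = (fun j : Fin (m + 1) => if (i : ℕ) < (j : ℕ) then U i else D i) (c k) := by
    intro k
    simp only [mem_mu]
  rw [Finset.prod_congr rfl fun k _ => e1 k,
    prod_comp_cntv (fun j : Fin (m + 1) => if (i : ℕ) < (j : ℕ) then U i else D i) c]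
  have e2 : ∀ j : Fin (m + 1),
      ((if (i : ℕ) < (j : ℕ) then U i else D i) ^ cntv c j)
        = D i ^ (if (j : ℕ) ≤ (i : ℕ) then cntv c j else 0)
          * U i ^ (if (i : ℕ) < (j : ℕ) then cntv c j else 0) := by
    intro j
    by_cases h : (i : ℕ) < (j : ℕ)
    · rw [if_pos h, if_pos h, if_neg (by omega), pow_zero, one_mul]
    · rw [if_neg h, if_neg h, if_pos (by omega), pow_zero, mul_one]
  rw [Finset.prod_congr rfl fun j _ => e2 j, Finset.prod_mul_distrib,
    Finset.prod_pow_eq_pow_sum, Finset.prod_pow_eq_pow_sum]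

lemma value_eq (b : Fin m → ℝ) (D U S0 a : Fin m → ℝ) (K : ℝ) :
    ∑ τ : Fin n → Finset (Fin m), prodM (qStar b) τ *
        max (∑ i, a i * S0 i * ∏ k : Fin n, (if i ∈ τ k then U i else D i) - K) 0
      = ∑ kk ∈ Finset.Nat.antidiagonalTuple (m + 1) n,
        ((n.factorial : ℝ) / ∏ j : Fin (m + 1), ((kk j).factorial : ℝ)) *
        (∏ j : Fin (m + 1), qStar b (mu m (j : ℕ)) ^ kk j) *
        max (∑ i : Fin m, a i * S0 i *
            D i ^ (∑ j : Fin (m + 1), if (j : ℕ) ≤ (i : ℕ) then kk j else 0) *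
            U i ^ (∑ j : Fin (m + 1), if (i : ℕ) < (j : ℕ) then kk j else 0) - K) 0 := by
  classical
  set q := qStar b with hqdef
  set F : (Fin n → Finset (Fin m)) → ℝ := fun τ => prodM q τ *
    max (∑ i, a i * S0 i * ∏ k : Fin n, (if i ∈ τ k then U i else D i) - K) 0 with hF
  set H : (Fin (m + 1) → ℕ) → ℝ := fun kk =>
    (∏ j : Fin (m + 1), q (mu m (j : ℕ)) ^ kk j) *
    max (∑ i : Fin m, a i * S0 i *
        D i ^ (∑ j : Fin (m + 1), if (j : ℕ) ≤ (i : ℕ) then kk j else 0) *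
        U i ^ (∑ j : Fin (m + 1), if (i : ℕ) < (j : ℕ) then kk j else 0) - K) 0 with hH
  set emb : (Fin n → Fin (m + 1)) → (Fin n → Finset (Fin m)) :=
    fun c k => mu m ((c k : ℕ)) with hemb
  -- step 1 : restrict to the chain
  have step1 : ∑ τ : Fin n → Finset (Fin m), F τ = ∑ c : Fin n → Fin (m + 1), F (emb c) := by
    rw [← Finset.sum_subset (Finset.subset_univ (Finset.image emb Finset.univ)) ?_]
    · rw [Finset.sum_image ?_]
      intro c _ c' _ h
      funext k
      have := congrFun h k
      exact Fin.ext (mu_inj (by omega) (by omega) this)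
    · intro τ _ hτ
      have hex : ∃ k, ∀ j : Fin (m + 1), τ k ≠ mu m (j : ℕ) := by
        by_contra hcon
        push_neg at hcon
        choose cfun hc using hcon
        exact hτ (Finset.mem_image.2 ⟨cfun, Finset.mem_univ _, funext fun k => (hc k).symm⟩)
      obtain ⟨k, hk⟩ := hex
      have : prodM q τ = 0 := by
        unfold prodM
        apply Finset.prod_eq_zero (Finset.mem_univ k)
        rw [hqdef]
        apply qStar_eq_zero
        intro j hj
        exact hk ⟨j, by omega⟩
      rw [hF]
      simp only [this, zero_mul]
  -- step 2 : rewrite each term through the counts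
  have step2 : ∀ c : Fin n → Fin (m + 1), F (emb c) = H (cntv c) := by
    intro c
    simp only [hF, hH, hemb]
    congr 1
    · unfold prodM
      exact prod_comp_cntv (fun j : Fin (m + 1) => q (mu m (j : ℕ))) c
    · congr 2
      refine Finset.sum_congr rfl fun i _ => ?_
      rw [payoff_prod D U i c, ← mul_assoc]
  -- step 3 : group by fibres
  have hmaps : ∀ c : Fin n → Fin (m + 1), c ∈ Finset.univ →
      cntv c ∈ Finset.Nat.antidiagonalTuple (m + 1) n := by
    intro c _
    rw [Finset.Nat.mem_antidiagonalTuple]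
    exact sum_cntv c
  have step3 : ∑ c : Fin n → Fin (m + 1), H (cntv c)
      = ∑ kk ∈ Finset.Nat.antidiagonalTuple (m + 1) n,
          ((Finset.univ.filter fun c : Fin n → Fin (m + 1) => cntv c = kk).card : ℝ) * H kk := by
    rw [← Finset.sum_fiberwise_of_maps_to hmaps (fun c => H (cntv c))]
    refine Finset.sum_congr rfl fun kk _ => ?_
    have e : ∀ c ∈ Finset.univ.filter fun c : Fin n → Fin (m + 1) => cntv c = kk,
        H (cntv c) = H kk := by
      intro c hc
      rw [(Finset.mem_filter.1 hc).2]
    rw [Finset.sum_congr rfl e, Finset.sum_const, nsmul_eq_mul]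
  -- step 4 : identify the cardinality
  rw [step1, Finset.sum_congr rfl fun c _ => step2 c, step3]
  refine Finset.sum_congr rfl fun kk hkk => ?_
  have hcount := count_lemma n kk (Finset.Nat.mem_antidiagonalTuple.1 hkk)
  have hcast : ((∏ j, (kk j).factorial : ℕ) : ℝ) *
      ((Finset.univ.filter fun c : Fin n → Fin (m + 1) => cntv c = kk).card : ℝ)
      = (n.factorial : ℝ) := by
    exact_mod_cast congrArg (fun x : ℕ => (x : ℝ)) hcount
  have hne : ((∏ j, (kk j).factorial : ℕ) : ℝ) ≠ 0 := by
    positivity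
  have hcard : ((Finset.univ.filter fun c : Fin n → Fin (m + 1) => cntv c = kk).card : ℝ)
      = (n.factorial : ℝ) / ∏ j : Fin (m + 1), ((kk j).factorial : ℝ) := by
    rw [eq_div_iff (by push_cast at hne ⊢; exact hne)]
    rw [mul_comm] at hcast
    push_cast at hcast
    exact hcast
  rw [hcard, hH, ← mul_assoc]

end PartG2
section PartH

variable {m n : ℕ}

lemma max_supermod_aux (p q r s K : ℝ) (hsum : p + q = r + s) (hps : p ≤ s) (hqs : q ≤ s) :
    max (p - K) 0 + max (q - K) 0 ≤ max (s - K) 0 + max (r - K) 0 := by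
  rcases le_total p K with h | h
  · have e1 : max (p - K) 0 = 0 := max_eq_right (by linarith)
    rw [e1, zero_add]
    calc max (q - K) 0 ≤ max (s - K) 0 := max_le_max (by linarith) le_rfl
      _ ≤ max (s - K) 0 + max (r - K) 0 := le_add_of_nonneg_right (le_max_right _ _)
  · rcases le_total q K with h2 | h2
    · have e1 : max (q - K) 0 = 0 := max_eq_right (by linarith)
      rw [e1, add_zero]
      calc max (p - K) 0 ≤ max (s - K) 0 := max_le_max (by linarith) le_rfl
        _ ≤ max (s - K) 0 + max (r - K) 0 := le_add_of_nonneg_right (le_max_right _ _)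
    · have e1 : max (p - K) 0 = p - K := max_eq_left (by linarith)
      have e2 : max (q - K) 0 = q - K := max_eq_left (by linarith)
      rw [e1, e2]
      have h3 : s - K ≤ max (s - K) 0 := le_max_left _ _
      have h4 : r - K ≤ max (r - K) 0 := le_max_left _ _
      linarith

lemma payoff_fibsupermod (D U S0 a : Fin m → ℝ) (K : ℝ)
    (hD : ∀ i, 0 < D i) (hDU : ∀ i, D i ≤ U i) (hS0 : ∀ i, 0 ≤ S0 i) (ha : ∀ i, 0 ≤ a i) :
    FibSupermod (fun ω : Fin n → Finset (Fin m) =>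
      max (∑ i, a i * S0 i * ∏ k : Fin n, (if i ∈ ω k then U i else D i) - K) 0) := by
  intro k0 lam
  set w : Fin m → ℝ := fun i =>
    a i * S0 i * ∏ k ∈ Finset.univ.erase k0, (if i ∈ lam k then U i else D i) with hw
  have hw0 : ∀ i, 0 ≤ w i := by
    intro i
    apply mul_nonneg (mul_nonneg (ha i) (hS0 i))
    apply Finset.prod_nonneg
    intro k _
    split
    · exact le_trans (hD i).le (hDU i)
    · exact (hD i).le
  set g : Finset (Fin m) → ℝ := fun S => ∑ i, w i * (if i ∈ S then U i else D i) with hg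
  have hgexpr : ∀ S : Finset (Fin m),
      (∑ i, a i * S0 i * ∏ k : Fin n, (if i ∈ Function.update lam k0 S k then U i else D i))
        = g S := by
    intro S
    rw [hg]
    refine Finset.sum_congr rfl fun i _ => ?_
    have hprod : ∏ k : Fin n, (if i ∈ Function.update lam k0 S k then U i else D i)
        = (if i ∈ S then U i else D i)
          * ∏ k ∈ Finset.univ.erase k0, (if i ∈ lam k then U i else D i) := by
      rw [← Finset.mul_prod_erase Finset.univ _ (Finset.mem_univ k0), Function.update_self]
      congr 1
      refine Finset.prod_congr rfl fun k hk => ?_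
      rw [Function.update_of_ne (Finset.ne_of_mem_erase hk)]
    rw [hprod, hw]
    ring
  have hmod : ∀ S T : Finset (Fin m), g S + g T = g (S ∩ T) + g (S ∪ T) := by
    intro S T
    rw [hg, ← Finset.sum_add_distrib, ← Finset.sum_add_distrib]
    refine Finset.sum_congr rfl fun i _ => ?_
    by_cases hS : i ∈ S <;> by_cases hT : i ∈ T <;>
      simp [Finset.mem_union, Finset.mem_inter, hS, hT] <;> ring
  have hmono2 : ∀ S T : Finset (Fin m), S ⊆ T → g S ≤ g T := by
    intro S T hST
    rw [hg]
    refine Finset.sum_le_sum fun i _ => ?_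
    apply mul_le_mul_of_nonneg_left _ (hw0 i)
    by_cases hS : i ∈ S
    · rw [if_pos hS, if_pos (hST hS)]
    · rw [if_neg hS]
      by_cases hT : i ∈ T
      · rw [if_pos hT]; exact hDU i
      · rw [if_neg hT]
  intro S T
  dsimp only
  rw [hgexpr S, hgexpr T, hgexpr (S ∪ T), hgexpr (S ∩ T)]
  exact max_supermod_aux (g S) (g T) (g (S ∩ T)) (g (S ∪ T)) K (hmod S T)
    (hmono2 S (S ∪ T) Finset.subset_union_left) (hmono2 T (S ∪ T) Finset.subset_union_right)

end PartH

theorem basket_call_upper_bound {m n : ℕ} (hm : 0 < m) (hn : 0 < n)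
    (D U S0 a : Fin m → ℝ) (R K : ℝ)
    (hD : ∀ i, 0 < D i) (hDR : ∀ i, D i < R) (hRU : ∀ i, R < U i)
    (hS0 : ∀ i, 0 < S0 i) (ha : ∀ i, 0 ≤ a i) (hK : 0 ≤ K)
    (hmono : ∀ i j : Fin m, i ≤ j →
      (R - D j) / (U j - D j) ≤ (R - D i) / (U i - D i)) :
    IsGreatest
      {v : ℝ | ∃ P, MemMn (fun i => (R - D i) / (U i - D i)) P ∧
        v = ∑ ω : Fin n → Finset (Fin m),
          max (∑ i, a i * S0 i * ∏ k : Fin n, (if i ∈ ω k then U i else D i) - K) 0 * P ω}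
      (∑ kk ∈ Finset.Nat.antidiagonalTuple (m + 1) n,
        ((n.factorial : ℝ) / ∏ j : Fin (m + 1), ((kk j).factorial : ℝ)) *
        (∏ j : Fin (m + 1),
          qStar (fun i => (R - D i) / (U i - D i)) (mu m (j : ℕ)) ^ kk j) *
        max (∑ i : Fin m, a i * S0 i *
            D i ^ (∑ j : Fin (m + 1), if (j : ℕ) ≤ (i : ℕ) then kk j else 0) *
            U i ^ (∑ j : Fin (m + 1), if (i : ℕ) < (j : ℕ) then kk j else 0) - K) 0) := by
  classical
  set b : Fin m → ℝ := fun i => (R - D i) / (U i - D i) with hb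
  have hUD : ∀ i, 0 < U i - D i := fun i => by linarith [hDR i, hRU i]
  have hb0 : ∀ i, 0 ≤ b i := fun i => div_nonneg (by linarith [hDR i]) (hUD i).le
  have hb1 : ∀ i, b i ≤ 1 := fun i => (div_le_one (hUD i)).2 (by linarith [hRU i])
  have hq0 : ∀ S, 0 ≤ qStar b S := qStar_nonneg b hb1 hmono hb0
  have hDU : ∀ i, D i ≤ U i := fun i => le_of_lt (lt_trans (hDR i) (hRU i))
  have hXfib : FibSupermod (fun ω : Fin n → Finset (Fin m) =>
      max (∑ i, a i * S0 i * ∏ k : Fin n, (if i ∈ ω k then U i else D i) - K) 0) :=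
    payoff_fibsupermod D U S0 a K hD hDU (fun i => (hS0 i).le) ha
  have hval := value_eq (n := n) b D U S0 a K
  constructor
  · refine ⟨prodM (qStar b), prodM_memMn b hq0, ?_⟩
    rw [← hval]
    refine Finset.sum_congr rfl fun τ _ => ?_
    ring
  · rintro v ⟨P, hP, rfl⟩
    calc ∑ ω : Fin n → Finset (Fin m),
          max (∑ i, a i * S0 i * ∏ k : Fin n, (if i ∈ ω k then U i else D i) - K) 0 * P ω
        ≤ ∑ τ : Fin n → Finset (Fin m), prodM (qStar b) τ *
            max (∑ i, a i * S0 i * ∏ k : Fin n, (if i ∈ τ k then U i else D i) - K) 0 :=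
          upper_bound b _ hq0 hXfib hP
      _ = _ := hval
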